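/- If two weight assignments a, b: E → ℝ* on a directed network satisfy ∏_{e∈P} a_e = ∏_{e∈P} b_e for every directed path P between boundary vertices, and every vertex lies on some such path, then there is a function g: V → ℝ* with g ≡ 1 on boundary vertices such that b_{(u,v)} = g_v^{-1} a_{(u,v)} g_u for every edge (u,v) ∈ E. -/
import Mathlib


variable {V E : Type*}

/-- `es` is the edge list of a directed path from `i` to `j`. -/
def IsPath (src tgt : E → V) (es : List E) (i j : V) : Prop :=
  es.map src ++ [j] = i :: es.map tgt

/-- The list of vertices visited by a path starting at `i` with edge list `es`. -/
def pvisits (tgt : E → V) (i : V) (es : List E) : List V := i :: es.map tgt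

lemma isPath_append {src tgt : E → V} {es1 es2 : List E} {i k j : V}
    (h1 : IsPath src tgt es1 i k) (h2 : IsPath src tgt es2 k j) :
    IsPath src tgt (es1 ++ es2) i j := by
  unfold IsPath at *
  simp only [List.map_append, List.append_assoc]
  rw [h2, ← List.singleton_append, ← List.append_assoc, h1]
  simp

lemma isPath_split {src tgt : E → V} : ∀ {es : List E} {i j v : V},
    IsPath src tgt es i j → v ∈ pvisits tgt i es →
    ∃ es1 es2, es = es1 ++ es2 ∧ IsPath src tgt es1 i v ∧ IsPath src tgt es2 v j
  | [], i, j, v, hp, hv => by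
      simp only [IsPath, List.map_nil, List.nil_append, List.cons.injEq] at hp
      simp only [pvisits, List.map_nil, List.mem_singleton] at hv
      subst hv
      exact ⟨[], [], rfl, rfl, by simp [IsPath, hp.1]⟩
  | e :: es, i, j, v, hp, hv => by
      have h1 : src e = i ∧ IsPath src tgt es (tgt e) j := by
        simpa [IsPath] using hp
      rcases List.mem_cons.mp hv with h | h
      · exact ⟨[], e :: es, rfl, by simp [IsPath, h], by rw [h]; exact hp⟩
      · obtain ⟨es1, es2, heq, hp1, hp2⟩ := isPath_split h1.2 h
        refine ⟨e :: es1, es2, by rw [heq]; rfl, ?_, hp2⟩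
        have he : IsPath src tgt [e] i (tgt e) := by simp [IsPath, h1.1]
        exact isPath_append he hp1

/-- The combinatorial core of the gauge-uniqueness theorem: if `a, b : E → ℝ*`
have equal products along every directed path between boundary vertices, and every
vertex lies on some such path, then there is `g : V → ℝ*` with `g ≡ 1` on the
boundary vertices `K` such that `b_{(u,v)} = g_v⁻¹ a_{(u,v)} g_u` for every edge. -/
theorem gauge_from_path_products (src tgt : E → V) (K : Finset V)
    (hcover : ∀ v : V, ∃ i ∈ K, ∃ j ∈ K, ∃ es : List E,
      IsPath src tgt es i j ∧ v ∈ pvisits tgt i es)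
    (a b : E → ℝ) (ha : ∀ e, a e ≠ 0) (hb : ∀ e, b e ≠ 0)
    (hprod : ∀ i ∈ K, ∀ j ∈ K, ∀ es : List E, IsPath src tgt es i j →
      (es.map a).prod = (es.map b).prod) :
    ∃ g : V → ℝ, (∀ v, g v ≠ 0) ∧ (∀ v ∈ K, g v = 1) ∧
      ∀ e : E, b e = (g (tgt e))⁻¹ * a e * g (src e) := by
  classical
  have hpre : ∀ v : V, ∃ i ∈ K, ∃ es1 : List E, IsPath src tgt es1 i v := by
    intro v
    obtain ⟨i, hi, j, hj, es, hp, hv⟩ := hcover v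
    obtain ⟨es1, es2, -, h1, -⟩ := isPath_split hp hv
    exact ⟨i, hi, es1, h1⟩
  have hsuf : ∀ v : V, ∃ j ∈ K, ∃ es2 : List E, IsPath src tgt es2 v j := by
    intro v
    obtain ⟨i, hi, j, hj, es, hp, hv⟩ := hcover v
    obtain ⟨es1, es2, -, -, h2⟩ := isPath_split hp hv
    exact ⟨j, hj, es2, h2⟩
  obtain ⟨iv, hiv⟩ := Classical.axiomOfChoice hpre
  choose esv hesv using fun v => (hiv v).2
  set Pa : List E → ℝ := fun l => (l.map a).prod with hPadef
  set Pb : List E → ℝ := fun l => (l.map b).prod with hPbdef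
  have hPa : ∀ l, Pa l ≠ 0 := by
    intro l
    refine List.prod_ne_zero ?_
    intro hx
    obtain ⟨e, -, he⟩ := List.mem_map.mp hx
    exact ha e he
  have hPb : ∀ l, Pb l ≠ 0 := by
    intro l
    refine List.prod_ne_zero ?_
    intro hx
    obtain ⟨e, -, he⟩ := List.mem_map.mp hx
    exact hb e he
  have key : ∀ (v i i' : V) (l l' : List E), i ∈ K → i' ∈ K →
      IsPath src tgt l i v → IsPath src tgt l' i' v →
      Pa l * Pb l' = Pa l' * Pb l := by
    intro v i i' l l' hi hi' hl hl'
    obtain ⟨j, hj, t, ht⟩ := hsuf v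
    have h1 := hprod i hi j hj (l ++ t) (isPath_append hl ht)
    have h2 := hprod i' hi' j hj (l' ++ t) (isPath_append hl' ht)
    simp only [List.map_append, List.prod_append] at h1 h2
    have hc : Pa t * Pb t ≠ 0 := mul_ne_zero (hPa t) (hPb t)
    have h3 : (Pa l * Pb l') * (Pa t * Pb t) = (Pa l' * Pb l) * (Pa t * Pb t) := by
      have h1' : Pa l * Pa t = Pb l * Pb t := h1
      have h2' : Pa l' * Pa t = Pb l' * Pb t := h2
      linear_combination (Pb l' * Pb t) * h1' - (Pb l * Pb t) * h2'
    exact mul_right_cancel₀ hc h3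
  refine ⟨fun v => Pa (esv v) * (Pb (esv v))⁻¹, ?_, ?_, ?_⟩
  · intro v
    exact mul_ne_zero (hPa _) (inv_ne_zero (hPb _))
  · intro v hv
    have h := hprod (iv v) (hiv v).1 v hv (esv v) (hesv v)
    have h' : Pa (esv v) = Pb (esv v) := h
    show Pa (esv v) * (Pb (esv v))⁻¹ = 1
    rw [h']
    exact mul_inv_cancel₀ (hPb _)
  · intro e
    have he : IsPath src tgt [e] (src e) (tgt e) := rfl
    have hpath : IsPath src tgt (esv (src e) ++ [e]) (iv (src e)) (tgt e) :=
      isPath_append (hesv (src e)) he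
    have h := key (tgt e) (iv (src e)) (iv (tgt e)) (esv (src e) ++ [e]) (esv (tgt e))
      (hiv (src e)).1 (hiv (tgt e)).1 hpath (hesv (tgt e))
    have hPaapp : Pa (esv (src e) ++ [e]) = Pa (esv (src e)) * a e := by
      simp [hPadef]
    have hPbapp : Pb (esv (src e) ++ [e]) = Pb (esv (src e)) * b e := by
      simp [hPbdef]
    rw [hPaapp, hPbapp] at h
    have hA := hPa (esv (src e))
    have hB := hPb (esv (src e))
    have hC := hPa (esv (tgt e))
    have hD := hPb (esv (tgt e))
    show b e = (Pa (esv (tgt e)) * (Pb (esv (tgt e)))⁻¹)⁻¹ * a e * (Pa (esv (src e)) * (Pb (esv (src e)))⁻¹)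
    field_simp
    linear_combination -h
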